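/- Let 0 < q < 1 and let k ≥ 1, N ≥ 1, α ≥ 0 be integers. Then (q^{k(2-2N-α)} / (N·(1-q²)^k·(1-q^{2k}))) · ∑_{l=0}^{k-1} (-1)^l·q^{l(l+1)}·(q^{2N-2l};q²)_k·(q^{2N+2α-2l};q²)_k / ((q²;q²)_l·(q²;q²)_{k-l-1}) = M_α(k,N). (The left-hand side is the k-th moment of the discrete q-Laguerre ensemble obtained from the Schur-function expansion of power sums over hook partitions; the right-hand side is its terminating ₃φ₂ representation.) -/

import Mathlib

/-- The q-Pochhammer symbol `(a;c)_n = ∏_{i=0}^{n-1} (1 - a c^i)`. -/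
noncomputable def qPoch (a c : ℝ) (n : ℕ) : ℝ := ∏ i ∈ Finset.range n, (1 - a * c ^ i)

/-- The k-th moment `M_α(k,N)` of the normalised one-point function of the discrete
q-Laguerre ensemble with `N` particles and parameter `α` (terminating ₃φ₂ representation). -/
noncomputable def Mlag (q : ℝ) (α k N : ℕ) : ℝ :=
  (q ^ ((k : ℤ) * (2 - 2 * (N : ℤ) - (α : ℤ))) / ((N : ℝ) * (1 - q ^ 2) ^ k)) *
    (qPoch (q ^ (2 * N)) (q ^ 2) k * qPoch (q ^ (2 * N + 2 * α)) (q ^ 2) k /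
      qPoch (q ^ 2) (q ^ 2) k) *
    ∑ l ∈ Finset.range k,
      q ^ (-(2 * (k : ℤ) * (l : ℤ))) * qPoch (q ^ (2 - 2 * (k : ℤ))) (q ^ 2) l *
          qPoch (q ^ (2 - 2 * (N : ℤ))) (q ^ 2) l *
          qPoch (q ^ (2 - 2 * (N : ℤ) - 2 * (α : ℤ))) (q ^ 2) l /
        (qPoch (q ^ 2) (q ^ 2) l * qPoch (q ^ (2 - 2 * (N : ℤ) - 2 * (k : ℤ))) (q ^ 2) l *
          qPoch (q ^ (2 - 2 * (N : ℤ) - 2 * (α : ℤ) - 2 * (k : ℤ))) (q ^ 2) l)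

lemma qPoch_succ (a c : ℝ) (n : ℕ) :
    qPoch a c (n + 1) = qPoch a c n * (1 - a * c ^ n) := Finset.prod_range_succ _ _

lemma qPoch_zero (a c : ℝ) : qPoch a c 0 = 1 := Finset.prod_range_zero _

lemma qPochZ_succ (q : ℝ) (hq : q ≠ 0) (m : ℤ) (n : ℕ) :
    qPoch (q ^ m) (q ^ 2) (n + 1) = qPoch (q ^ m) (q ^ 2) n * (1 - q ^ (m + 2 * n)) := by
  rw [qPoch_succ]
  congr 2
  rw [← pow_mul, ← zpow_natCast q (2 * n), ← zpow_add₀ hq]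
  push_cast; ring_nf

lemma one_sub_zpow_ne (q : ℝ) (hq0 : 0 < q) (hq1 : q < 1) (e : ℤ) (he : e ≠ 0) :
    (1 : ℝ) - q ^ e ≠ 0 := by
  have : q ^ e ≠ 1 := fun h =>
    he (zpow_right_injective₀ hq0 (ne_of_lt hq1) (h.trans (zpow_zero q).symm))
  exact sub_ne_zero.mpr (fun h => this h.symm)

lemma qPochZ_ne (q : ℝ) (hq0 : 0 < q) (hq1 : q < 1) (m : ℤ) (n : ℕ)
    (h : ∀ i : ℕ, i < n → m + 2 * i ≠ 0) : qPoch (q ^ m) (q ^ 2) n ≠ 0 := by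
  induction n with
  | zero => simp [qPoch_zero]
  | succ n ih =>
    rw [qPochZ_succ q (ne_of_gt hq0)]
    exact mul_ne_zero (ih fun i hi => h i (Nat.lt_succ_of_lt hi))
      (one_sub_zpow_ne q hq0 hq1 _ (h n (Nat.lt_succ_self n)))

lemma qPoch_shift (q : ℝ) (hq : q ≠ 0) (a : ℤ) (k : ℕ) :
    qPoch (q ^ (a - 2)) (q ^ 2) k * (1 - q ^ (a - 2 + 2 * k)) =
      (1 - q ^ (a - 2)) * qPoch (q ^ a) (q ^ 2) k := by
  induction k with
  | zero => simp [qPoch_zero]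
  | succ k ih =>
    rw [qPochZ_succ q hq, qPochZ_succ q hq]
    push_cast
    rw [show a - 2 + 2 * ((k : ℤ) + 1) = a + 2 * k by ring,
      show a - 2 + 2 * (k : ℤ) = a - 2 + 2 * (k : ℕ) by push_cast; ring]
    calc qPoch (q ^ (a - 2)) (q ^ 2) k * (1 - q ^ (a - 2 + 2 * (k:ℕ))) * (1 - q ^ (a + 2 * (k:ℤ)))
        = (1 - q ^ (a - 2)) * qPoch (q ^ a) (q ^ 2) k * (1 - q ^ (a + 2 * (k:ℤ))) := by rw [ih]
      _ = (1 - q ^ (a - 2)) * (qPoch (q ^ a) (q ^ 2) k * (1 - q ^ (a + 2 * (k:ℤ)))) := by ring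

lemma key1 (q : ℝ) (hq0 : 0 < q) (hq1 : q < 1) (m : ℤ) (hm : 1 ≤ m) (k : ℕ) :
    ∀ l : ℕ, l ≤ k →
      qPoch (q ^ (m - 2 * l)) (q ^ 2) k * qPoch (q ^ (2 - m - 2 * k)) (q ^ 2) l *
          q ^ (2 * (k : ℤ) * l) =
        qPoch (q ^ m) (q ^ 2) k * qPoch (q ^ (2 - m)) (q ^ 2) l := by
  have hq : q ≠ 0 := ne_of_gt hq0
  intro l
  induction l with
  | zero => intro _; simp [qPoch_zero]
  | succ l ih =>
    intro hl
    have IH := ih (Nat.le_of_succ_le hl)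
    have hc : (1 : ℝ) - q ^ (m - 2 * (l : ℤ) - 2 + 2 * k) ≠ 0 := by
      apply one_sub_zpow_ne q hq0 hq1
      have : (l : ℤ) + 1 ≤ k := by exact_mod_cast hl
      omega
    apply mul_right_cancel₀ hc
    have hsh := qPoch_shift q hq (m - 2 * l) k
    rw [show m - 2 * (l:ℤ) - 2 = m - 2 * l - 2 from rfl] at hc
    rw [qPochZ_succ q hq, qPochZ_succ q hq]
    push_cast
    rw [show m - 2 * ((l:ℤ) + 1) = m - 2 * l - 2 by ring]
    have hz : q ^ (2 * (k:ℤ) * ((l:ℤ) + 1)) = q ^ (2 * (k:ℤ) * l) * q ^ (2 * (k:ℤ)) := by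
      rw [← zpow_add₀ hq]; ring_nf
    rw [hz]
    have hac : q ^ (m - 2 * (l:ℤ) - 2) * q ^ (2 * (k:ℤ)) = q ^ (m - 2 * (l:ℤ) - 2 + 2 * k) := by
      rw [← zpow_add₀ hq]
    have hbc : q ^ (2 - m - 2 * (k:ℤ) + 2 * l) * q ^ (2 * (k:ℤ)) = q ^ (2 - m + 2 * (l:ℤ)) := by
      rw [← zpow_add₀ hq]; ring_nf
    have habc : q ^ (m - 2 * (l:ℤ) - 2) * q ^ (2 - m - 2 * (k:ℤ) + 2 * l) * q ^ (2 * (k:ℤ)) = 1 := by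
      rw [← zpow_add₀ hq, ← zpow_add₀ hq,
        show m - 2 * (l:ℤ) - 2 + (2 - m - 2 * (k:ℤ) + 2 * l) + 2 * k = 0 by ring, zpow_zero]
    linear_combination
      (qPoch (q ^ (2 - m - 2 * (k:ℤ))) (q ^ 2) l * (1 - q ^ (2 - m - 2 * (k:ℤ) + 2 * l)) *
        q ^ (2 * (k:ℤ) * (l:ℤ)) * q ^ (2 * (k:ℤ))) * hsh +
      ((1 - q ^ (m - 2 * (l:ℤ) - 2)) * (1 - q ^ (2 - m - 2 * (k:ℤ) + 2 * l)) * q ^ (2 * (k:ℤ))) * IH +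
      (qPoch (q ^ m) (q ^ 2) k * qPoch (q ^ (2 - m)) (q ^ 2) l *
        (q ^ (2 - m - 2 * (k:ℤ) + 2 * l) * q ^ (2 * (k:ℤ)) - 1)) * hac +
      (qPoch (q ^ m) (q ^ 2) k * qPoch (q ^ (2 - m)) (q ^ 2) l *
        (q ^ (m - 2 * (l:ℤ) - 2 + 2 * k) - 1)) * hbc +
      (qPoch (q ^ m) (q ^ 2) k * qPoch (q ^ (2 - m)) (q ^ 2) l *
        (1 - q ^ (2 * (k:ℤ)))) * habc

lemma one_sub_pow_ne (q : ℝ) (hq0 : 0 < q) (hq1 : q < 1) (n : ℕ) (hn : n ≠ 0) :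
    (1 : ℝ) - q ^ n ≠ 0 :=
  ne_of_gt (by have := pow_lt_one₀ hq0.le hq1 hn; linarith)

lemma qPochN_succ (q : ℝ) (n : ℕ) :
    qPoch (q ^ 2) (q ^ 2) (n + 1) = qPoch (q ^ 2) (q ^ 2) n * (1 - q ^ (2 * n + 2)) := by
  rw [qPoch_succ]; congr 2; ring

lemma key2 (q : ℝ) (hq0 : 0 < q) (hq1 : q < 1) (k : ℕ) (hk : 1 ≤ k) :
    ∀ l : ℕ, l ≤ k - 1 →
      qPoch (q ^ (2 - 2 * (k : ℤ))) (q ^ 2) l * qPoch (q ^ 2) (q ^ 2) (k - 1 - l) *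
          q ^ (2 * (k : ℤ) * l) =
        (-1 : ℝ) ^ l * q ^ (l * (l + 1)) * qPoch (q ^ 2) (q ^ 2) (k - 1) := by
  have hq : q ≠ 0 := ne_of_gt hq0
  intro l
  induction l with
  | zero => intro _; simp [qPoch_zero]
  | succ l ih =>
    intro hl
    have IH := ih (Nat.le_of_succ_le hl)
    have hc : (1 : ℝ) - q ^ (2 * (k - 1 - l)) ≠ 0 :=
      one_sub_pow_ne q hq0 hq1 _ (by omega)
    apply mul_right_cancel₀ hc
    have hsplit : qPoch (q ^ 2) (q ^ 2) (k - 1 - l) =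
        qPoch (q ^ 2) (q ^ 2) (k - 1 - (l + 1)) * (1 - q ^ (2 * (k - 1 - l))) := by
      rw [show k - 1 - l = (k - 1 - (l + 1)) + 1 by omega, qPochN_succ]
      congr 3
    rw [qPochZ_succ q hq]
    have hz : q ^ (2 * (k:ℤ) * ((l:ℕ) + 1 : ℕ)) = q ^ (2 * (k:ℤ) * l) * q ^ (2 * (k:ℤ)) := by
      rw [← zpow_add₀ hq]; push_cast; ring_nf
    rw [hz]
    have ha : q ^ (2 - 2 * (k:ℤ) + 2 * l) * q ^ (2 * (k:ℤ)) = q ^ (2 * l + 2 : ℕ) := by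
      rw [← zpow_add₀ hq, ← zpow_natCast q (2 * l + 2)]
      congr 1; push_cast; ring
    have hb : q ^ (2 * l + 2 : ℕ) * q ^ (2 * (k - 1 - l) : ℕ) = q ^ (2 * (k:ℤ)) := by
      rw [← pow_add, ← zpow_natCast q (2 * l + 2 + 2 * (k - 1 - l))]
      congr 1
      have : 2 * l + 2 + 2 * (k - 1 - l) = 2 * k := by omega
      rw [this]; push_cast; ring
    have hqq : q ^ ((l + 1) * (l + 1 + 1)) = q ^ (l * (l + 1)) * q ^ (2 * l + 2) := by
      rw [← pow_add]; congr 1; ring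
    linear_combination
      (- (qPoch (q ^ (2 - 2 * (k:ℤ))) (q ^ 2) l * (1 - q ^ (2 - 2 * (k:ℤ) + 2 * (l:ℤ))) *
        q ^ (2 * (k:ℤ) * (l:ℤ)) * q ^ (2 * (k:ℤ)))) * hsplit +
      ((1 - q ^ (2 - 2 * (k:ℤ) + 2 * (l:ℤ))) * q ^ (2 * (k:ℤ))) * IH +
      (- ((-1:ℝ) ^ l * q ^ (l * (l + 1)) * qPoch (q ^ 2) (q ^ 2) (k - 1))) * ha +
      (- ((-1:ℝ) ^ l * q ^ (l * (l + 1)) * qPoch (q ^ 2) (q ^ 2) (k - 1))) * hb +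
      ((-1:ℝ) ^ l * qPoch (q ^ 2) (q ^ 2) (k - 1) * (1 - q ^ (2 * (k - 1 - l)))) * hqq

lemma qPochN_ne (q : ℝ) (hq0 : 0 < q) (hq1 : q < 1) (n : ℕ) :
    qPoch (q ^ 2) (q ^ 2) n ≠ 0 := by
  induction n with
  | zero => simp [qPoch_zero]
  | succ n ih =>
    rw [qPochN_succ]
    exact mul_ne_zero ih (one_sub_pow_ne q hq0 hq1 _ (by omega))

/-- The Schur-function (hook partition) expansion of the k-th moment of the discrete
q-Laguerre ensemble equals its terminating ₃φ₂ representation. -/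
theorem qLaguerre_moment_hook_sum_eq_basic_hypergeometric
    (q : ℝ) (hq0 : 0 < q) (hq1 : q < 1) (k N α : ℕ) (hk : 1 ≤ k) (hN : 1 ≤ N) :
    (q ^ ((k : ℤ) * (2 - 2 * (N : ℤ) - (α : ℤ))) /
        ((N : ℝ) * (1 - q ^ 2) ^ k * (1 - q ^ (2 * k)))) *
      ∑ l ∈ Finset.range k,
        (-1 : ℝ) ^ l * q ^ (l * (l + 1)) *
            qPoch (q ^ (2 * (N : ℤ) - 2 * (l : ℤ))) (q ^ 2) k *
            qPoch (q ^ (2 * (N : ℤ) + 2 * (α : ℤ) - 2 * (l : ℤ))) (q ^ 2) k /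
          (qPoch (q ^ 2) (q ^ 2) l * qPoch (q ^ 2) (q ^ 2) (k - l - 1)) =
      Mlag q α k N := by
  have hq : q ≠ 0 := ne_of_gt hq0
  rw [Mlag, Finset.mul_sum, Finset.mul_sum]
  apply Finset.sum_congr rfl
  intro l hl
  rw [Finset.mem_range] at hl
  -- convert natural-power pochhammer arguments to integer powers
  rw [show (q : ℝ) ^ (2 * N) = q ^ (2 * (N : ℤ)) by
        rw [← zpow_natCast q (2 * N)]; push_cast; ring_nf,
      show (q : ℝ) ^ (2 * N + 2 * α) = q ^ (2 * (N : ℤ) + 2 * (α : ℤ)) by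
        rw [← zpow_natCast q (2 * N + 2 * α)]; push_cast; ring_nf]
  have h1 := key1 q hq0 hq1 (2 * (N : ℤ)) (by omega) k l (le_of_lt hl)
  have h2 := key1 q hq0 hq1 (2 * (N : ℤ) + 2 * (α : ℤ)) (by omega) k l (le_of_lt hl)
  rw [show 2 - (2 * (N:ℤ) + 2 * (α:ℤ)) - 2 * (k:ℤ) = 2 - 2 * (N:ℤ) - 2 * (α:ℤ) - 2 * (k:ℤ) by ring,
      show 2 - (2 * (N:ℤ) + 2 * (α:ℤ)) = 2 - 2 * (N:ℤ) - 2 * (α:ℤ) by ring,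
      show 2 * (N:ℤ) + 2 * (α:ℤ) - 2 * (l:ℤ) = 2 * (N:ℤ) + 2 * (α:ℤ) - 2 * (l:ℤ) by ring] at h2
  have h3 := key2 q hq0 hq1 k hk l (by omega)
  rw [show k - 1 - l = k - l - 1 by omega] at h3
  have h4 : qPoch (q ^ 2) (q ^ 2) k = qPoch (q ^ 2) (q ^ 2) (k - 1) * (1 - q ^ (2 * k)) := by
    rw [show k = (k - 1) + 1 by omega, qPochN_succ]
    congr 3
    omega
  have hneg : q ^ (-(2 * (k:ℤ) * (l:ℤ))) = (q ^ (2 * (k:ℤ) * (l:ℤ)))⁻¹ := zpow_neg q _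
  rw [hneg]
  -- nonzero facts
  have hN0 : (N : ℝ) ≠ 0 := Nat.cast_ne_zero.mpr (by omega)
  have hP1 : ((1:ℝ) - q ^ 2) ^ k ≠ 0 := pow_ne_zero _ (one_sub_pow_ne q hq0 hq1 2 (by omega))
  have hE : q ^ ((k:ℤ) * (2 - 2 * (N:ℤ) - (α:ℤ))) ≠ 0 := zpow_ne_zero _ hq
  have hPl : qPoch (q ^ 2) (q ^ 2) l ≠ 0 := qPochN_ne q hq0 hq1 l
  have hQ : qPoch (q ^ 2) (q ^ 2) (k - l - 1) ≠ 0 := qPochN_ne q hq0 hq1 _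
  have hPk : qPoch (q ^ 2) (q ^ 2) k ≠ 0 := qPochN_ne q hq0 hq1 k
  have hD : qPoch (q ^ (2 - 2 * (N:ℤ) - 2 * (k:ℤ))) (q ^ 2) l ≠ 0 :=
    qPochZ_ne q hq0 hq1 _ l (fun i hi => by
      have : (i:ℤ) < l := by exact_mod_cast hi
      have : (l:ℤ) < k := by exact_mod_cast hl
      have : (1:ℤ) ≤ N := by exact_mod_cast hN
      omega)
  have hD' : qPoch (q ^ (2 - 2 * (N:ℤ) - 2 * (α:ℤ) - 2 * (k:ℤ))) (q ^ 2) l ≠ 0 :=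
    qPochZ_ne q hq0 hq1 _ l (fun i hi => by
      have : (i:ℤ) < l := by exact_mod_cast hi
      have : (l:ℤ) < k := by exact_mod_cast hl
      have : (1:ℤ) ≤ N := by exact_mod_cast hN
      have : (0:ℤ) ≤ α := by positivity
      omega)
  have h2k : (1:ℝ) - q ^ (2 * k) ≠ 0 := one_sub_pow_ne q hq0 hq1 _ (by omega)
  have ht : q ^ (2 * (k:ℤ) * (l:ℤ)) ≠ 0 := zpow_ne_zero _ hq
  field_simp
  apply mul_right_cancel₀ ht
  linear_combination
    (((-1:ℝ) ^ l * q ^ (l * (l + 1))) * qPoch (q ^ 2) (q ^ 2) k *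
      (qPoch (q ^ (2 * (N:ℤ) + 2 * (α:ℤ) - 2 * (l:ℤ))) (q ^ 2) k *
        qPoch (q ^ (2 - 2 * (N:ℤ) - 2 * (α:ℤ) - 2 * (k:ℤ))) (q ^ 2) l *
        q ^ (2 * (k:ℤ) * (l:ℤ)))) * h1 +
    (((-1:ℝ) ^ l * q ^ (l * (l + 1))) * qPoch (q ^ 2) (q ^ 2) k *
      (qPoch (q ^ (2 * (N:ℤ))) (q ^ 2) k * qPoch (q ^ (2 - 2 * (N:ℤ))) (q ^ 2) l)) * h2 -
    ((qPoch (q ^ (2 * (N:ℤ))) (q ^ 2) k * qPoch (q ^ (2 * (N:ℤ) + 2 * (α:ℤ))) (q ^ 2) k *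
        qPoch (q ^ (2 - 2 * (N:ℤ))) (q ^ 2) l *
        qPoch (q ^ (2 - 2 * (N:ℤ) - 2 * (α:ℤ))) (q ^ 2) l * (1 - q ^ (2 * k)))) * h3 +
    (((-1:ℝ) ^ l * q ^ (l * (l + 1))) *
      (qPoch (q ^ (2 * (N:ℤ))) (q ^ 2) k * qPoch (q ^ (2 * (N:ℤ) + 2 * (α:ℤ))) (q ^ 2) k *
        qPoch (q ^ (2 - 2 * (N:ℤ))) (q ^ 2) l *
        qPoch (q ^ (2 - 2 * (N:ℤ) - 2 * (α:ℤ))) (q ^ 2) l)) * h4
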